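/- Let 𝕋 = ℝ/2πℤ with Lebesgue measure, and let g : 𝕋 → ℝ be continuous with g ≥ 0 and ∫_𝕋 g = 1. Extend G complex-linearly by (Gℓ)(x) := g(x)·(ℓ(x) − ∫_𝕋 g(y)ℓ(y) dy) for ℓ : 𝕋 → ℂ. Let k₀, k₁, k₂ be pairwise distinct nonzero integers and λ₀, λ₁, λ₂ ∈ ℂ. If λ₀·G(e^{−ik₀x}) + λ₁·G(e^{−ik₁x}) + λ₂·G(e^{−ik₂x}) = 0 for every x ∈ 𝕋, then λ₀ = λ₁ = λ₂ = 0; that is, the three functions G(e^{−ik₀x}), G(e^{−ik₁x}), G(e^{−ik₂x}) are linearly independent over ℂ. -/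

import Mathlib

open MeasureTheory

instance : Fact ((0 : ℝ) < 2 * Real.pi) := ⟨by positivity⟩

/-- The complex-linear extension of the control operator:
`(G ℓ)(x) = g(x) (ℓ(x) − ∫ g(y) ℓ(y) dy)` for `ℓ : 𝕋 → ℂ`. -/
noncomputable def GopC (g : AddCircle (2 * Real.pi) → ℝ)
    (ℓ : AddCircle (2 * Real.pi) → ℂ) : AddCircle (2 * Real.pi) → ℂ :=
  fun x => (g x : ℂ) * (ℓ x - ∫ y : AddCircle (2 * Real.pi), (g y : ℂ) * ℓ y)

private lemma hasDerivAt_cexp_real (a : ℂ) (t : ℝ) :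
    HasDerivAt (fun s : ℝ => Complex.exp (a * s)) (a * Complex.exp (a * t)) t := by
  have h1 : HasDerivAt (fun s : ℝ => (s : ℂ)) 1 t := Complex.ofRealCLM.hasDerivAt
  have := (h1.const_mul a).cexp
  simpa [mul_comm] using this

private lemma fourier_neg_eq (k : ℤ) (t : ℝ) :
    fourier (-k) (t : AddCircle (2 * Real.pi)) = Complex.exp ((-(k : ℂ) * Complex.I) * t) := by
  rw [fourier_coe_apply]
  congr 1
  have hπ : (Real.pi : ℂ) ≠ 0 := by exact_mod_cast Real.pi_ne_zero
  have h2π : ((2 * Real.pi : ℝ) : ℂ) ≠ 0 := by push_cast; simp [hπ]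
  field_simp
  push_cast
  ring

/-- For continuous `g ≥ 0` with `∫ g = 1` and pairwise distinct nonzero
integers `k₀, k₁, k₂`, the functions `G(e^{-ik₀x}), G(e^{-ik₁x}), G(e^{-ik₂x})`
are linearly independent over `ℂ`. -/
theorem Gop_fourier_linearIndependent (g : AddCircle (2 * Real.pi) → ℝ)
    (hg_cont : Continuous g) (hg_nonneg : ∀ x, 0 ≤ g x)
    (hg_int : ∫ x : AddCircle (2 * Real.pi), g x = 1)
    (k₀ k₁ k₂ : ℤ) (hk₀ : k₀ ≠ 0) (hk₁ : k₁ ≠ 0) (hk₂ : k₂ ≠ 0)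
    (h01 : k₀ ≠ k₁) (h02 : k₀ ≠ k₂) (h12 : k₁ ≠ k₂)
    (lam₀ lam₁ lam₂ : ℂ)
    (hzero : ∀ x : AddCircle (2 * Real.pi),
      lam₀ * GopC g (fun y => fourier (-k₀) y) x +
      lam₁ * GopC g (fun y => fourier (-k₁) y) x +
      lam₂ * GopC g (fun y => fourier (-k₂) y) x = 0) :
    lam₀ = 0 ∧ lam₁ = 0 ∧ lam₂ = 0 := by
  classical
  -- a point where g is positive
  have hex : ∃ x, 0 < g x := by
    by_contra h
    push_neg at h
    have hz : ∀ x, g x = 0 := fun x => le_antisymm (h x) (hg_nonneg x)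
    have : (∫ x : AddCircle (2 * Real.pi), g x) = 0 := by simp [hz]
    rw [this] at hg_int
    norm_num at hg_int
  obtain ⟨x₀, hx₀⟩ := hex
  obtain ⟨t₀, ht₀⟩ : ∃ t₀ : ℝ, (t₀ : AddCircle (2 * Real.pi)) = x₀ :=
    Quot.exists_rep x₀
  -- constants
  set c₀ : ℂ := ∫ y : AddCircle (2 * Real.pi), (g y : ℂ) * fourier (-k₀) y with hc₀
  set c₁ : ℂ := ∫ y : AddCircle (2 * Real.pi), (g y : ℂ) * fourier (-k₁) y with hc₁
  set c₂ : ℂ := ∫ y : AddCircle (2 * Real.pi), (g y : ℂ) * fourier (-k₂) y with hc₂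
  set a₀ : ℂ := -(k₀ : ℂ) * Complex.I with ha₀
  set a₁ : ℂ := -(k₁ : ℂ) * Complex.I with ha₁
  set a₂ : ℂ := -(k₂ : ℂ) * Complex.I with ha₂
  set h : ℝ → ℂ := fun t =>
    lam₀ * (Complex.exp (a₀ * t) - c₀) + lam₁ * (Complex.exp (a₁ * t) - c₁) +
      lam₂ * (Complex.exp (a₂ * t) - c₂) with hh
  have key : ∀ t : ℝ, (g (t : AddCircle (2 * Real.pi)) : ℂ) * h t = 0 := by
    intro t
    have hz := hzero (t : AddCircle (2 * Real.pi))
    simp only [GopC] at hz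
    rw [fourier_neg_eq k₀ t, fourier_neg_eq k₁ t, fourier_neg_eq k₂ t] at hz
    simp only [hh, ← ha₀, ← ha₁, ← ha₂, ← hc₀, ← hc₁, ← hc₂] at hz ⊢
    linear_combination hz
  -- h vanishes near t₀
  have hgc : Continuous fun t : ℝ => g (t : AddCircle (2 * Real.pi)) :=
    hg_cont.comp (AddCircle.continuous_mk' _)
  have hopen : IsOpen {t : ℝ | 0 < g (t : AddCircle (2 * Real.pi))} :=
    isOpen_lt continuous_const hgc
  have hmem : t₀ ∈ {t : ℝ | 0 < g (t : AddCircle (2 * Real.pi))} := by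
    simp only [Set.mem_setOf_eq, ht₀]; exact hx₀
  have heq : h =ᶠ[nhds t₀] fun _ => (0 : ℂ) := by
    filter_upwards [hopen.mem_nhds hmem] with t ht
    have := key t
    have hgne : (g (t : AddCircle (2 * Real.pi)) : ℂ) ≠ 0 := by
      exact_mod_cast ne_of_gt ht
    exact (mul_eq_zero.mp this).resolve_left hgne
  -- derivatives
  set h1 : ℝ → ℂ := fun t =>
    lam₀ * (a₀ * Complex.exp (a₀ * t)) + lam₁ * (a₁ * Complex.exp (a₁ * t)) +
      lam₂ * (a₂ * Complex.exp (a₂ * t)) with hh1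
  set h2 : ℝ → ℂ := fun t =>
    lam₀ * (a₀ * (a₀ * Complex.exp (a₀ * t))) + lam₁ * (a₁ * (a₁ * Complex.exp (a₁ * t))) +
      lam₂ * (a₂ * (a₂ * Complex.exp (a₂ * t))) with hh2
  set h3 : ℝ → ℂ := fun t =>
    lam₀ * (a₀ * (a₀ * (a₀ * Complex.exp (a₀ * t)))) +
      lam₁ * (a₁ * (a₁ * (a₁ * Complex.exp (a₁ * t)))) +
      lam₂ * (a₂ * (a₂ * (a₂ * Complex.exp (a₂ * t)))) with hh3
  have hd1 : deriv h = h1 := by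
    funext t
    have : HasDerivAt h (h1 t) t := by
      exact ((((hasDerivAt_cexp_real a₀ t).sub_const c₀).const_mul lam₀).add
        (((hasDerivAt_cexp_real a₁ t).sub_const c₁).const_mul lam₁)).add
        (((hasDerivAt_cexp_real a₂ t).sub_const c₂).const_mul lam₂)
    exact this.deriv
  have hd2 : deriv h1 = h2 := by
    funext t
    have : HasDerivAt h1 (h2 t) t := by
      have e0 := ((hasDerivAt_cexp_real a₀ t).const_mul a₀).const_mul lam₀
      have e1 := ((hasDerivAt_cexp_real a₁ t).const_mul a₁).const_mul lam₁
      have e2 := ((hasDerivAt_cexp_real a₂ t).const_mul a₂).const_mul lam₂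
      exact (e0.add e1).add e2
    exact this.deriv
  have hd3 : deriv h2 = h3 := by
    funext t
    have : HasDerivAt h2 (h3 t) t := by
      have e0 := (((hasDerivAt_cexp_real a₀ t).const_mul a₀).const_mul a₀).const_mul lam₀
      have e1 := (((hasDerivAt_cexp_real a₁ t).const_mul a₁).const_mul a₁).const_mul lam₁
      have e2 := (((hasDerivAt_cexp_real a₂ t).const_mul a₂).const_mul a₂).const_mul lam₂
      exact (e0.add e1).add e2
    exact this.deriv
  have heq1 : h1 =ᶠ[nhds t₀] fun _ => (0 : ℂ) := by
    have := heq.deriv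
    rw [hd1] at this
    simpa using this
  have heq2 : h2 =ᶠ[nhds t₀] fun _ => (0 : ℂ) := by
    have := heq1.deriv
    rw [hd2] at this
    simpa using this
  have heq3 : h3 =ᶠ[nhds t₀] fun _ => (0 : ℂ) := by
    have := heq2.deriv
    rw [hd3] at this
    simpa using this
  have E1 : h1 t₀ = 0 := heq1.self_of_nhds
  have E2 : h2 t₀ = 0 := heq2.self_of_nhds
  have E3 : h3 t₀ = 0 := heq3.self_of_nhds
  simp only [hh1] at E1
  simp only [hh2] at E2
  simp only [hh3] at E3
  -- nonvanishing facts
  have hI : (Complex.I : ℂ) ≠ 0 := Complex.I_ne_zero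
  have hka : ∀ k : ℤ, k ≠ 0 → (-(k : ℂ) * Complex.I) ≠ 0 := by
    intro k hk hc
    rcases mul_eq_zero.mp hc with h' | h'
    · exact hk (by exact_mod_cast neg_eq_zero.mp h')
    · exact hI h'
  have ha₀0 : a₀ ≠ 0 := hka k₀ hk₀
  have ha₁0 : a₁ ≠ 0 := hka k₁ hk₁
  have ha₂0 : a₂ ≠ 0 := hka k₂ hk₂
  have hdiff : ∀ m n : ℤ, m ≠ n →
      (-(m : ℂ) * Complex.I) - (-(n : ℂ) * Complex.I) ≠ 0 := by
    intro m n hmn hcon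
    apply hmn
    have : ((m : ℂ) - n) * Complex.I = 0 := by linear_combination -hcon
    rcases mul_eq_zero.mp this with h | h
    · exact_mod_cast sub_eq_zero.mp h
    · exact absurd h hI
  have h01' : a₀ - a₁ ≠ 0 := hdiff k₀ k₁ h01
  have h02' : a₀ - a₂ ≠ 0 := hdiff k₀ k₂ h02
  have h12' : a₁ - a₂ ≠ 0 := hdiff k₁ k₂ h12
  have hE₀ : Complex.exp (a₀ * t₀) ≠ 0 := Complex.exp_ne_zero _
  have hE₁ : Complex.exp (a₁ * t₀) ≠ 0 := Complex.exp_ne_zero _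
  have hE₂ : Complex.exp (a₂ * t₀) ≠ 0 := Complex.exp_ne_zero _
  -- Vandermonde-style elimination
  have hl₀ : lam₀ * Complex.exp (a₀ * t₀) * a₀ * (a₀ - a₁) * (a₀ - a₂) = 0 := by
    linear_combination E3 - (a₁ + a₂) * E2 + (a₁ * a₂) * E1
  have hl₁ : lam₁ * Complex.exp (a₁ * t₀) * a₁ * (a₁ - a₀) * (a₁ - a₂) = 0 := by
    linear_combination E3 - (a₀ + a₂) * E2 + (a₀ * a₂) * E1
  have hl₂ : lam₂ * Complex.exp (a₂ * t₀) * a₂ * (a₂ - a₀) * (a₂ - a₁) = 0 := by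
    linear_combination E3 - (a₀ + a₁) * E2 + (a₀ * a₁) * E1
  have h10' : a₁ - a₀ ≠ 0 := fun hc => h01' (by linear_combination -hc)
  have h20' : a₂ - a₀ ≠ 0 := fun hc => h02' (by linear_combination -hc)
  have h21' : a₂ - a₁ ≠ 0 := fun hc => h12' (by linear_combination -hc)
  refine ⟨?_, ?_, ?_⟩
  · have := mul_ne_zero (mul_ne_zero (mul_ne_zero hE₀ ha₀0) h01') h02'
    rcases mul_eq_zero.mp hl₀ with h' | h'
    · rcases mul_eq_zero.mp h' with h'' | h''
      · rcases mul_eq_zero.mp h'' with h3' | h3'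
        · rcases mul_eq_zero.mp h3' with h4' | h4'
          · exact h4'
          · exact absurd h4' hE₀
        · exact absurd h3' ha₀0
      · exact absurd h'' h01'
    · exact absurd h' h02'
  · rcases mul_eq_zero.mp hl₁ with h' | h'
    · rcases mul_eq_zero.mp h' with h'' | h''
      · rcases mul_eq_zero.mp h'' with h3' | h3'
        · rcases mul_eq_zero.mp h3' with h4' | h4'
          · exact h4'
          · exact absurd h4' hE₁
        · exact absurd h3' ha₁0
      · exact absurd h'' h10'
    · exact absurd h' h12'
  · rcases mul_eq_zero.mp hl₂ with h' | h'
    · rcases mul_eq_zero.mp h' with h'' | h''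
      · rcases mul_eq_zero.mp h'' with h3' | h3'
        · rcases mul_eq_zero.mp h3' with h4' | h4'
          · exact h4'
          · exact absurd h4' hE₂
        · exact absurd h3' ha₂0
      · exact absurd h'' h20'
    · exact absurd h' h21'
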